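/- Let G be obtained from a connected bipartite graph G' with bipartition U ∪ W by attaching n_u ≥ 1 pendant vertices to each u ∈ U and n_w ≥ 0 pendant triangles to each w ∈ W. Then MM(G) = IM(G) = |U| + Σ_{w∈W} n_w and IS(G) = Σ_{u∈U} n_u + Σ_{w∈W} max(n_w, 1). -/

import Mathlib

variable {V : Type*}

/-- `M` is a matching in `G`: a finite set of edges of `G` that are pairwise non-incident. -/
def IsMatchingSet (G : SimpleGraph V) (M : Finset (Sym2 V)) : Prop :=
  (∀ e ∈ M, e ∈ G.edgeSet) ∧
  ∀ e ∈ M, ∀ f ∈ M, e ≠ f → ∀ v : V, v ∈ e → v ∉ f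

/-- `M` is an induced matching in `G`: a matching such that no edge of `G`
joins two distinct edges of `M`. -/
def IsInducedMatchingSet (G : SimpleGraph V) (M : Finset (Sym2 V)) : Prop :=
  IsMatchingSet G M ∧
  ∀ e ∈ M, ∀ f ∈ M, e ≠ f → ∀ a ∈ e, ∀ b ∈ f, ¬ G.Adj a b

/-- `S` is an independent set in `G`. -/
def IsIndepFinset (G : SimpleGraph V) (S : Finset V) : Prop :=
  ∀ a ∈ S, ∀ b ∈ S, ¬ G.Adj a b

/-- Maximum matching size `MM(G)`. -/
noncomputable def MMn (G : SimpleGraph V) : ℕ :=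
  sSup {n | ∃ M : Finset (Sym2 V), IsMatchingSet G M ∧ M.card = n}

/-- Maximum induced matching size `IM(G)`. -/
noncomputable def IMn (G : SimpleGraph V) : ℕ :=
  sSup {n | ∃ M : Finset (Sym2 V), IsInducedMatchingSet G M ∧ M.card = n}

/-- Maximum independent set size `IS(G)`. -/
noncomputable def ISn (G : SimpleGraph V) : ℕ :=
  sSup {n | ∃ S : Finset V, IsIndepFinset G S ∧ S.card = n}

/-- Vertex type of the Cameron–Walker construction: the original vertices,
the pendant vertices (`nP x` of them attached to `x`), and the pendant-triangle
vertices (`2 · nT x` of them attached to `x`, in pairs indexed by `ℕ × Bool`). -/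
def AugV (V' : Type*) (nP nT : V' → ℕ) : Type _ :=
  V' ⊕ ({p : V' × ℕ // p.2 < nP p.1} ⊕ {q : V' × ℕ × Bool // q.2.1 < nT q.1})

/-- Base adjacency relation of the Cameron–Walker construction. -/
def AugAdj {V' : Type*} (G' : SimpleGraph V') (nP nT : V' → ℕ) :
    AugV V' nP nT → AugV V' nP nT → Prop
  | Sum.inl a, Sum.inl b => G'.Adj a b
  | Sum.inl a, Sum.inr (Sum.inl p) => p.1.1 = a
  | Sum.inl a, Sum.inr (Sum.inr q) => q.1.1 = a
  | Sum.inr (Sum.inr q), Sum.inr (Sum.inr q') => q.1.1 = q'.1.1 ∧ q.1.2.1 = q'.1.2.1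
  | _, _ => False

/-- The graph obtained from `G'` by attaching `nP x` pendant vertices and
`nT x` pendant triangles to each vertex `x`. -/
def AugGraph {V' : Type*} (G' : SimpleGraph V') (nP nT : V' → ℕ) :
    SimpleGraph (AugV V' nP nT) :=
  SimpleGraph.fromRel (AugAdj G' nP nT)

attribute [reducible] AugV

namespace CW

variable {V' : Type*}

instance instDecEqAugV [DecidableEq V'] (nP nT : V' → ℕ) : DecidableEq (AugV V' nP nT) := by
  unfold AugV; infer_instance

/-- base vertex of an augmented vertex -/
def baseOf {nP nT : V' → ℕ} : AugV V' nP nT → V'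
  | Sum.inl x => x
  | Sum.inr (Sum.inl p) => p.1.1
  | Sum.inr (Sum.inr q) => q.1.1

section eqs
variable {nP nT : V' → ℕ}

@[simp] lemma inl_eq_inl {a b : V'} : (Sum.inl a : AugV V' nP nT) = Sum.inl b ↔ a = b :=
  ⟨fun h => Sum.inl.inj h, fun h => h ▸ rfl⟩

@[simp] lemma inl_ne_inr {a : V'} {x} : (Sum.inl a : AugV V' nP nT) ≠ Sum.inr x :=
  fun h => Sum.inl_ne_inr h

@[simp] lemma inr_ne_inl {a : V'} {x} : (Sum.inr x : AugV V' nP nT) ≠ Sum.inl a :=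
  fun h => Sum.inr_ne_inl h

@[simp] lemma inr_eq_inr {x y} : (Sum.inr x : AugV V' nP nT) = Sum.inr y ↔ x = y :=
  ⟨fun h => Sum.inr.inj h, fun h => h ▸ rfl⟩

lemma inl_inj {a b : V'} (h : (Sum.inl a : AugV V' nP nT) = Sum.inl b) : a = b :=
  Sum.inl.inj h

lemma pend_inj {p p' : {p : V' × ℕ // p.2 < nP p.1}}
    (h : (Sum.inr (Sum.inl p) : AugV V' nP nT) = Sum.inr (Sum.inl p')) : p.1 = p'.1 :=
  congrArg Subtype.val (Sum.inl.inj (Sum.inr.inj h))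

lemma tri_inj {q q' : {q : V' × ℕ × Bool // q.2.1 < nT q.1}}
    (h : (Sum.inr (Sum.inr q) : AugV V' nP nT) = Sum.inr (Sum.inr q')) : q.1 = q'.1 :=
  congrArg Subtype.val (Sum.inr.inj (Sum.inr.inj h))

lemma pend_ne_tri {p q} :
    (Sum.inr (Sum.inl p) : AugV V' nP nT) ≠ Sum.inr (Sum.inr q) :=
  fun h => Sum.inl_ne_inr (Sum.inr.inj h)

lemma tri_ne_pend {p q} :
    (Sum.inr (Sum.inr q) : AugV V' nP nT) ≠ Sum.inr (Sum.inl p) :=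
  fun h => Sum.inr_ne_inl (Sum.inr.inj h)

end eqs

section adj
variable {G' : SimpleGraph V'} {nP nT : V' → ℕ}

lemma adj_iff {a b : AugV V' nP nT} :
    (AugGraph G' nP nT).Adj a b ↔ a ≠ b ∧ (AugAdj G' nP nT a b ∨ AugAdj G' nP nT b a) :=
  Iff.rfl

-- classification of edges
lemma adj_cases {a b : AugV V' nP nT} (h : (AugGraph G' nP nT).Adj a b) :
    (∃ x y, G'.Adj x y ∧ ((a = Sum.inl x ∧ b = Sum.inl y))) ∨
    (∃ x p, p.1.1 = x ∧ ((a = Sum.inl x ∧ b = Sum.inr (Sum.inl p)) ∨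
        (b = Sum.inl x ∧ a = Sum.inr (Sum.inl p)))) ∨
    (∃ x q, q.1.1 = x ∧ ((a = Sum.inl x ∧ b = Sum.inr (Sum.inr q)) ∨
        (b = Sum.inl x ∧ a = Sum.inr (Sum.inr q)))) ∨
    (∃ q q', q.1.1 = q'.1.1 ∧ q.1.2.1 = q'.1.2.1 ∧ q ≠ q' ∧
        a = Sum.inr (Sum.inr q) ∧ b = Sum.inr (Sum.inr q')) := by
  rw [adj_iff] at h
  obtain ⟨hne, h | h⟩ := h
  · obtain (x | (p | q)) := a <;> obtain (y | (p' | q')) := b <;>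
      simp only [AugAdj] at h
    · exact Or.inl ⟨x, y, h, rfl, rfl⟩
    · exact Or.inr (Or.inl ⟨x, p', h, Or.inl ⟨rfl, rfl⟩⟩)
    · exact Or.inr (Or.inr (Or.inl ⟨x, q', h, Or.inl ⟨rfl, rfl⟩⟩))
    · exact Or.inr (Or.inr (Or.inr ⟨q, q', h.1, h.2, by rintro rfl; exact hne rfl, rfl, rfl⟩))
  · obtain (x | (p | q)) := a <;> obtain (y | (p' | q')) := b <;>
      simp only [AugAdj] at h
    · exact Or.inl ⟨x, y, h.symm, rfl, rfl⟩
    · exact Or.inr (Or.inl ⟨y, p, h, Or.inr ⟨rfl, rfl⟩⟩)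
    · exact Or.inr (Or.inr (Or.inl ⟨y, q, h, Or.inr ⟨rfl, rfl⟩⟩))
    · exact Or.inr (Or.inr (Or.inr ⟨q, q', h.1.symm, h.2.symm,
        by rintro rfl; exact hne rfl, rfl, rfl⟩))
end adj

section constructions
variable {V' : Type*} [Fintype V'] [DecidableEq V'] (U W : Finset V') (nP nT : V' → ℕ)

def MP : Finset (Sym2 (AugV V' nP nT)) :=
  U.biUnion fun u => (Finset.range (min (nP u) 1)).attach.image fun i =>
    s(Sum.inl u, Sum.inr (Sum.inl ⟨(u, i.1),
      lt_of_lt_of_le (Finset.mem_range.mp i.2) (min_le_left _ _)⟩))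

def MT : Finset (Sym2 (AugV V' nP nT)) :=
  Finset.univ.biUnion fun w => (Finset.range (nT w)).attach.image fun i =>
    s(Sum.inr (Sum.inr ⟨(w, i.1, false), Finset.mem_range.mp i.2⟩),
      Sum.inr (Sum.inr ⟨(w, i.1, true), Finset.mem_range.mp i.2⟩))

variable {U W} {nP nT}

lemma mem_MP {e : Sym2 (AugV V' nP nT)} :
    e ∈ (MP U nP nT : Finset _) ↔ ∃ u, u ∈ U ∧ ∃ h : 0 < nP u,
      e = s(Sum.inl u, Sum.inr (Sum.inl ⟨(u, 0), h⟩)) := by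
  simp only [MP, Finset.mem_biUnion, Finset.mem_image, Finset.mem_attach, true_and]
  constructor
  · rintro ⟨u, hu, ⟨i, hi⟩, rfl⟩
    rw [Finset.mem_range] at hi
    have h1 : i = 0 := by omega
    subst h1
    exact ⟨u, hu, by omega, rfl⟩
  · rintro ⟨u, hu, h, rfl⟩
    exact ⟨u, hu, ⟨0, Finset.mem_range.mpr (by omega)⟩, rfl⟩

lemma mem_MT {e : Sym2 (AugV V' nP nT)} :
    e ∈ MT nP nT ↔ ∃ w i, ∃ h : i < nT w,
      e = s(Sum.inr (Sum.inr ⟨(w, i, false), h⟩), Sum.inr (Sum.inr ⟨(w, i, true), h⟩)) := by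
  simp only [MT, Finset.mem_biUnion, Finset.mem_univ, true_and, Finset.mem_image,
    Finset.mem_attach]
  constructor
  · rintro ⟨w, ⟨i, hi⟩, rfl⟩
    exact ⟨w, i, Finset.mem_range.mp hi, rfl⟩
  · rintro ⟨w, i, h, rfl⟩
    exact ⟨w, ⟨i, Finset.mem_range.mpr h⟩, rfl⟩

lemma card_MP' (hnP : ∀ u ∈ U, 1 ≤ nP u) : (MP U nP nT).card = U.card := by
  rw [MP, Finset.card_biUnion]
  · rw [Finset.sum_congr rfl (g := fun _ => 1), Finset.sum_const, smul_eq_mul, mul_one]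
    intro u hu
    rw [Finset.card_image_of_injOn, Finset.card_attach, Finset.card_range]
    · have := hnP u hu; omega
    · rintro ⟨i, hi⟩ - ⟨j, hj⟩ - h
      rw [Sym2.eq_iff] at h
      rcases h with ⟨-, h⟩ | ⟨h, -⟩
      · exact Subtype.ext (congrArg Prod.snd (pend_inj h))
      · exact absurd h inl_ne_inr
  · intro u _ v _ huv
    rw [Function.onFun, Finset.disjoint_left]
    rintro e he he'
    simp only [Finset.mem_image, Finset.mem_attach, true_and] at he he'
    obtain ⟨i, rfl⟩ := he
    obtain ⟨j, hj⟩ := he'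
    rw [Sym2.eq_iff] at hj
    rcases hj with ⟨h, -⟩ | ⟨h, -⟩
    · exact huv (inl_inj h.symm)
    · exact inl_ne_inr h

lemma card_MT' : (MT nP nT).card = ∑ w, nT w := by
  rw [MT, Finset.card_biUnion]
  · refine Finset.sum_congr rfl fun w _ => ?_
    rw [Finset.card_image_of_injOn, Finset.card_attach, Finset.card_range]
    rintro ⟨i, hi⟩ - ⟨j, hj⟩ - h
    rw [Sym2.eq_iff] at h
    rcases h with ⟨h, -⟩ | ⟨h, -⟩
    · exact Subtype.ext (congrArg (fun x => x.2.1) (tri_inj h))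
    · exact absurd (congrArg (fun x => x.2.2) (tri_inj h)) (by simp)
  · intro u _ v _ huv
    rw [Function.onFun, Finset.disjoint_left]
    rintro e he he'
    simp only [Finset.mem_image, Finset.mem_attach, true_and] at he he'
    obtain ⟨i, rfl⟩ := he
    obtain ⟨j, hj⟩ := he'
    rw [Sym2.eq_iff] at hj
    rcases hj with ⟨h, -⟩ | ⟨h, -⟩
    · exact huv (congrArg Prod.fst (tri_inj h)).symm
    · exact absurd (congrArg (fun x => x.2.2) (tri_inj h)) (by simp)

end constructions

section matching
variable {V' : Type*} [Fintype V'] [DecidableEq V'] {G' : SimpleGraph V'}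
  {U W : Finset V'} {nP nT : V' → ℕ}

lemma wbase (hnT0 : ∀ x ∉ W, nT x = 0) {w : V'} {k : ℕ} (h : k < nT w) : w ∈ W := by
  by_contra hw; rw [hnT0 w hw] at h; omega

lemma pbase (hnP0 : ∀ x ∉ U, nP x = 0) {u : V'} {k : ℕ} (h : k < nP u) : u ∈ U := by
  by_contra hu; rw [hnP0 u hu] at h; omega

lemma M0_strong (hdisj : ∀ x : V', ¬(x ∈ U ∧ x ∈ W))
    (hbip : ∀ a b : V', G'.Adj a b → (a ∈ U ∧ b ∈ W) ∨ (a ∈ W ∧ b ∈ U))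
    (hnT0 : ∀ x ∉ W, nT x = 0) :
    ∀ e ∈ MP U nP nT ∪ MT nP nT, ∀ f ∈ MP U nP nT ∪ MT nP nT, e ≠ f →
      ∀ a ∈ e, ∀ b ∈ f, a ≠ b ∧ ¬ (AugGraph G' nP nT).Adj a b := by
  intro e he f hf hef a ha b hb
  rw [Finset.mem_union] at he hf
  rcases he with he | he <;> rcases hf with hf | hf
  · -- pendant / pendant
    obtain ⟨u, hu, hp, rfl⟩ := mem_MP.mp he
    obtain ⟨u', hu', hp', rfl⟩ := mem_MP.mp hf
    have huu : u ≠ u' := by rintro rfl; exact hef rfl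
    rw [Sym2.mem_iff] at ha hb
    rcases ha with rfl | rfl <;> rcases hb with rfl | rfl
    · refine ⟨fun h => huu (inl_inj h), ?_⟩
      rw [adj_iff]; rintro ⟨-, h | h⟩ <;> simp only [AugAdj] at h
      · rcases hbip _ _ h with ⟨h1, h2⟩ | ⟨h1, h2⟩
        · exact hdisj u' ⟨hu', h2⟩
        · exact hdisj u ⟨hu, h1⟩
      · rcases hbip _ _ h with ⟨h1, h2⟩ | ⟨h1, h2⟩
        · exact hdisj u ⟨hu, h2⟩
        · exact hdisj u' ⟨hu', h1⟩
    · refine ⟨inl_ne_inr, ?_⟩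
      rw [adj_iff]; rintro ⟨-, h | h⟩ <;> simp only [AugAdj] at h
      exact huu h.symm
    · refine ⟨inr_ne_inl, ?_⟩
      rw [adj_iff]; rintro ⟨-, h | h⟩ <;> simp only [AugAdj] at h
      exact huu h
    · refine ⟨fun h => huu (congrArg Prod.fst (pend_inj h)), ?_⟩
      rw [adj_iff]; rintro ⟨-, h | h⟩ <;> simp only [AugAdj] at h
  · -- pendant / triangle
    obtain ⟨u, hu, hp, rfl⟩ := mem_MP.mp he
    obtain ⟨w, i, hi, rfl⟩ := mem_MT.mp hf
    have hw : w ∈ W := wbase hnT0 hi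
    have huw : u ≠ w := fun h => hdisj u ⟨hu, h ▸ hw⟩
    rw [Sym2.mem_iff] at ha hb
    rcases ha with rfl | rfl <;> rcases hb with rfl | rfl
    · refine ⟨inl_ne_inr, ?_⟩
      rw [adj_iff]; rintro ⟨-, h | h⟩ <;> simp only [AugAdj] at h
      exact huw h.symm
    · refine ⟨inl_ne_inr, ?_⟩
      rw [adj_iff]; rintro ⟨-, h | h⟩ <;> simp only [AugAdj] at h
      exact huw h.symm
    · exact ⟨pend_ne_tri, by rw [adj_iff]; rintro ⟨-, h | h⟩ <;> simp only [AugAdj] at h⟩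
    · exact ⟨pend_ne_tri, by rw [adj_iff]; rintro ⟨-, h | h⟩ <;> simp only [AugAdj] at h⟩
  · -- triangle / pendant
    obtain ⟨w, i, hi, rfl⟩ := mem_MT.mp he
    obtain ⟨u, hu, hp, rfl⟩ := mem_MP.mp hf
    have hw : w ∈ W := wbase hnT0 hi
    have huw : u ≠ w := fun h => hdisj u ⟨hu, h ▸ hw⟩
    rw [Sym2.mem_iff] at ha hb
    rcases ha with rfl | rfl <;> rcases hb with rfl | rfl
    · refine ⟨inr_ne_inl, ?_⟩
      rw [adj_iff]; rintro ⟨-, h | h⟩ <;> simp only [AugAdj] at h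
      exact huw h.symm
    · exact ⟨tri_ne_pend, by rw [adj_iff]; rintro ⟨-, h | h⟩ <;> simp only [AugAdj] at h⟩
    · refine ⟨inr_ne_inl, ?_⟩
      rw [adj_iff]; rintro ⟨-, h | h⟩ <;> simp only [AugAdj] at h
      exact huw h.symm
    · exact ⟨tri_ne_pend, by rw [adj_iff]; rintro ⟨-, h | h⟩ <;> simp only [AugAdj] at h⟩
  · -- triangle / triangle
    obtain ⟨w, i, hi, rfl⟩ := mem_MT.mp he
    obtain ⟨w', i', hi', rfl⟩ := mem_MT.mp hf
    have hkey : ¬(w = w' ∧ i = i') := by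
      rintro ⟨rfl, rfl⟩; exact hef rfl
    rw [Sym2.mem_iff] at ha hb
    rcases ha with rfl | rfl <;> rcases hb with rfl | rfl <;>
    · constructor
      · intro h
        have h2 := tri_inj h
        exact hkey ⟨congrArg Prod.fst h2, congrArg (fun x => x.2.1) h2⟩
      · rw [adj_iff]; rintro ⟨-, h | h⟩ <;> simp only [AugAdj] at h
        · exact hkey h
        · exact hkey ⟨h.1.symm, h.2.symm⟩

lemma M0_induced (hdisj : ∀ x : V', ¬(x ∈ U ∧ x ∈ W))
    (hbip : ∀ a b : V', G'.Adj a b → (a ∈ U ∧ b ∈ W) ∨ (a ∈ W ∧ b ∈ U))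
    (hnT0 : ∀ x ∉ W, nT x = 0) :
    IsInducedMatchingSet (AugGraph G' nP nT) (MP U nP nT ∪ MT nP nT) := by
  have hstrong := M0_strong (nP := nP) (G' := G') hdisj hbip hnT0
  refine ⟨⟨?_, ?_⟩, ?_⟩
  · intro e he
    rw [Finset.mem_union] at he
    rcases he with he | he
    · obtain ⟨u, hu, h, rfl⟩ := mem_MP.mp he
      rw [SimpleGraph.mem_edgeSet, adj_iff]
      exact ⟨inl_ne_inr, Or.inl rfl⟩
    · obtain ⟨w, i, h, rfl⟩ := mem_MT.mp he
      rw [SimpleGraph.mem_edgeSet, adj_iff]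
      refine ⟨fun hc => ?_, Or.inl ⟨rfl, rfl⟩⟩
      exact absurd (congrArg (fun x => x.2.2) (tri_inj hc)) (by simp)
  · intro e he f hf hef v hv hvf
    exact (hstrong e he f hf hef v hv v hvf).1 rfl
  · intro e he f hf hef a ha b hb
    exact (hstrong e he f hf hef a ha b hb).2

lemma card_M0 (hnP : ∀ u ∈ U, 1 ≤ nP u) (hnT0 : ∀ x ∉ W, nT x = 0) :
    (MP U nP nT ∪ MT nP nT).card = U.card + ∑ w ∈ W, nT w := by
  rw [Finset.card_union_of_disjoint, card_MP' hnP, card_MT']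
  · congr 1
    rw [Finset.sum_subset (Finset.subset_univ W)]
    intro x _ hx; exact hnT0 x hx
  · rw [Finset.disjoint_left]
    intro e he hf
    obtain ⟨u, hu, h, rfl⟩ := mem_MP.mp he
    obtain ⟨w, i, hi, hfe⟩ := mem_MT.mp hf
    rw [Sym2.eq_iff] at hfe
    rcases hfe with ⟨h1, -⟩ | ⟨h1, -⟩ <;> exact inl_ne_inr h1

end matching

section indep
variable {V' : Type*} [Fintype V'] [DecidableEq V'] {G' : SimpleGraph V'}
  {U W : Finset V'} (nP nT : V' → ℕ)

def SP : Finset (AugV V' nP nT) :=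
  Finset.univ.biUnion fun u => (Finset.range (nP u)).attach.image fun i =>
    Sum.inr (Sum.inl ⟨(u, i.1), Finset.mem_range.mp i.2⟩)

def ST (W : Finset V') : Finset (AugV V' nP nT) :=
  Finset.univ.biUnion fun w =>
    if w ∈ W ∧ nT w = 0 then {Sum.inl w} else
      (Finset.range (nT w)).attach.image fun i =>
        Sum.inr (Sum.inr ⟨(w, i.1, false), Finset.mem_range.mp i.2⟩)

variable {nP nT}

lemma mem_SP {v : AugV V' nP nT} : v ∈ SP nP nT ↔ ∃ p, v = Sum.inr (Sum.inl p) := by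
  simp only [SP, Finset.mem_biUnion, Finset.mem_univ, true_and, Finset.mem_image,
    Finset.mem_attach]
  constructor
  · rintro ⟨u, ⟨i, hi⟩, rfl⟩; exact ⟨_, rfl⟩
  · rintro ⟨⟨⟨u, i⟩, hp⟩, rfl⟩
    exact ⟨u, ⟨i, Finset.mem_range.mpr hp⟩, rfl⟩

lemma mem_ST {v : AugV V' nP nT} : v ∈ ST nP nT W ↔
    (∃ w, w ∈ W ∧ nT w = 0 ∧ v = Sum.inl w) ∨
    (∃ q, q.1.2.2 = false ∧ v = Sum.inr (Sum.inr q)) := by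
  simp only [ST, Finset.mem_biUnion, Finset.mem_univ, true_and]
  constructor
  · rintro ⟨w, hw⟩
    by_cases hc : w ∈ W ∧ nT w = 0
    · rw [if_pos hc, Finset.mem_singleton] at hw
      exact Or.inl ⟨w, hc.1, hc.2, hw⟩
    · rw [if_neg hc] at hw
      simp only [Finset.mem_image, Finset.mem_attach, true_and] at hw
      obtain ⟨i, rfl⟩ := hw
      exact Or.inr ⟨_, rfl, rfl⟩
  · rintro (⟨w, hw, h0, rfl⟩ | ⟨⟨⟨w, i, b⟩, hq⟩, hb, rfl⟩)
    · exact ⟨w, by rw [if_pos ⟨hw, h0⟩]; exact Finset.mem_singleton_self _⟩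
    · obtain rfl : b = false := hb
      have hq' : i < nT w := hq
      refine ⟨w, ?_⟩
      rw [if_neg (fun hc => by rw [hc.2] at hq'; omega)]
      simp only [Finset.mem_image, Finset.mem_attach, true_and]
      exact ⟨⟨i, Finset.mem_range.mpr hq'⟩, rfl⟩

lemma card_SP (hnP0 : ∀ x ∉ U, nP x = 0) : (SP nP nT : Finset (AugV V' nP nT)).card = ∑ u ∈ U, nP u := by
  rw [SP, Finset.card_biUnion]
  · rw [Finset.sum_congr rfl (g := fun u => nP u)
      (fun u _ => by
        rw [Finset.card_image_of_injOn, Finset.card_attach, Finset.card_range]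
        rintro ⟨i, hi⟩ - ⟨j, hj⟩ - h
        exact Subtype.ext (congrArg Prod.snd (pend_inj h)))]
    rw [Finset.sum_subset (Finset.subset_univ U)]
    intro x _ hx; exact hnP0 x hx
  · intro u _ v _ huv
    rw [Function.onFun, Finset.disjoint_left]
    rintro a ha hb
    simp only [Finset.mem_image, Finset.mem_attach, true_and] at ha hb
    obtain ⟨i, rfl⟩ := ha
    obtain ⟨j, hj⟩ := hb
    exact huv (congrArg Prod.fst (pend_inj hj)).symm

lemma card_ST (hnT0 : ∀ x ∉ W, nT x = 0) :
    (ST nP nT W : Finset (AugV V' nP nT)).card = ∑ w ∈ W, max (nT w) 1 := by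
  rw [ST, Finset.card_biUnion]
  · have hcards : ∀ w : V', (if w ∈ W ∧ nT w = 0 then ({Sum.inl w} : Finset (AugV V' nP nT)) else
        (Finset.range (nT w)).attach.image fun i =>
          Sum.inr (Sum.inr ⟨(w, i.1, false), Finset.mem_range.mp i.2⟩)).card
        = if w ∈ W then max (nT w) 1 else 0 := by
      intro w
      by_cases hc : w ∈ W ∧ nT w = 0
      · rw [if_pos hc, if_pos hc.1, Finset.card_singleton, hc.2]; simp
      · rw [if_neg hc, Finset.card_image_of_injOn, Finset.card_attach, Finset.card_range]
        · by_cases hw : w ∈ W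
          · rw [if_pos hw]
            have : nT w ≠ 0 := fun h => hc ⟨hw, h⟩
            omega
          · rw [if_neg hw, hnT0 w hw]
        · rintro ⟨i, hi⟩ - ⟨j, hj⟩ - h
          exact Subtype.ext (congrArg (fun x => x.2.1) (tri_inj h))
    rw [Finset.sum_congr rfl (fun w _ => hcards w), Finset.sum_ite_mem,
      Finset.univ_inter]
  · intro u _ v _ huv
    rw [Function.onFun, Finset.disjoint_left]
    rintro a ha hb
    by_cases hc : u ∈ W ∧ nT u = 0 <;> by_cases hc' : v ∈ W ∧ nT v = 0
    · rw [if_pos hc, Finset.mem_singleton] at ha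
      rw [if_pos hc', Finset.mem_singleton] at hb
      subst ha
      exact huv (inl_inj hb)
    · rw [if_pos hc, Finset.mem_singleton] at ha
      rw [if_neg hc'] at hb
      simp only [Finset.mem_image, Finset.mem_attach, true_and] at hb
      obtain ⟨j, hj⟩ := hb
      subst ha
      exact inr_ne_inl hj
    · rw [if_neg hc] at ha
      rw [if_pos hc', Finset.mem_singleton] at hb
      simp only [Finset.mem_image, Finset.mem_attach, true_and] at ha
      obtain ⟨i, rfl⟩ := ha
      exact inr_ne_inl hb
    · rw [if_neg hc] at ha
      rw [if_neg hc'] at hb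
      simp only [Finset.mem_image, Finset.mem_attach, true_and] at ha hb
      obtain ⟨i, rfl⟩ := ha
      obtain ⟨j, hj⟩ := hb
      exact huv (congrArg Prod.fst (tri_inj hj)).symm

lemma S0_indep (hdisj : ∀ x : V', ¬(x ∈ U ∧ x ∈ W))
    (hbip : ∀ a b : V', G'.Adj a b → (a ∈ U ∧ b ∈ W) ∨ (a ∈ W ∧ b ∈ U))
    (hnP0 : ∀ x ∉ U, nP x = 0) :
    IsIndepFinset (AugGraph G' nP nT) (SP nP nT ∪ ST nP nT W) := by
  intro a ha b hb hadj
  rw [Finset.mem_union] at ha hb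
  have hWU : ∀ w ∈ W, w ∉ U := fun w hw hu => hdisj w ⟨hu, hw⟩
  obtain ⟨hne, hor⟩ := adj_iff.mp hadj
  have key : ∀ x y : AugV V' nP nT,
      (x ∈ SP nP nT ∨ x ∈ ST nP nT W) → (y ∈ SP nP nT ∨ y ∈ ST nP nT W) → x ≠ y →
      ¬ AugAdj G' nP nT x y := by
    rintro x y hx hy hxy h
    have hx' : (∃ p, x = Sum.inr (Sum.inl p)) ∨ (∃ w, w ∈ W ∧ nT w = 0 ∧ x = Sum.inl w) ∨
        (∃ q, q.1.2.2 = false ∧ x = Sum.inr (Sum.inr q)) := by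
      rcases hx with hx | hx
      · exact Or.inl (mem_SP.mp hx)
      · rcases mem_ST.mp hx with h1 | h1
        · exact Or.inr (Or.inl h1)
        · exact Or.inr (Or.inr h1)
    have hy' : (∃ p, y = Sum.inr (Sum.inl p)) ∨ (∃ w, w ∈ W ∧ nT w = 0 ∧ y = Sum.inl w) ∨
        (∃ q, q.1.2.2 = false ∧ y = Sum.inr (Sum.inr q)) := by
      rcases hy with hy | hy
      · exact Or.inl (mem_SP.mp hy)
      · rcases mem_ST.mp hy with h1 | h1
        · exact Or.inr (Or.inl h1)
        · exact Or.inr (Or.inr h1)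
    rcases hx' with ⟨p, rfl⟩ | ⟨w, hw, h0, rfl⟩ | ⟨q, hb0, rfl⟩ <;>
      rcases hy' with ⟨p', rfl⟩ | ⟨w', hw', h0', rfl⟩ | ⟨q', hb0', rfl⟩ <;>
      simp only [AugAdj] at h
    · -- L-P
      have := p'.2
      rw [h, hnP0 w (hWU w hw)] at this
      omega
    · -- L-L : G'.Adj w w'
      rcases hbip _ _ h with ⟨h1, -⟩ | ⟨-, h2⟩
      · exact hWU w hw h1
      · exact hWU w' hw' h2
    · -- L-T
      have := q'.2
      rw [h, h0] at this
      omega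
    · -- T-T
      apply hxy
      have : q = q' := by
        apply Subtype.ext
        have h1 : q.1.2 = q'.1.2 := by
          apply Prod.ext h.2
          rw [hb0, hb0']
        exact Prod.ext h.1 h1
      rw [this]
  rcases hor with h | h
  · exact key a b ha hb hne h
  · exact key b a hb ha (Ne.symm hne) h

lemma card_S0 (hnP0 : ∀ x ∉ U, nP x = 0) (hnT0 : ∀ x ∉ W, nT x = 0) :
    ((SP nP nT ∪ ST nP nT W : Finset (AugV V' nP nT))).card
      = ∑ u ∈ U, nP u + ∑ w ∈ W, max (nT w) 1 := by
  rw [Finset.card_union_of_disjoint, card_SP hnP0, card_ST hnT0]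
  rw [Finset.disjoint_left]
  intro a ha hb
  obtain ⟨p, rfl⟩ := mem_SP.mp ha
  rcases mem_ST.mp hb with ⟨w, -, -, h⟩ | ⟨q, -, h⟩
  · exact inr_ne_inl h
  · exact pend_ne_tri h

end indep

section mbound
variable {V' : Type*} [Fintype V'] [DecidableEq V'] {G' : SimpleGraph V'}
  {U W : Finset V'} {nP nT : V' → ℕ}

def TW (W : Finset V') (nT : V' → ℕ) : Finset (V' × ℕ) :=
  W.biUnion fun w => (Finset.range (nT w)).image fun i => (w, i)

lemma card_TW : (TW W nT).card = ∑ w ∈ W, nT w := by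
  rw [TW, Finset.card_biUnion]
  · exact Finset.sum_congr rfl fun w _ => by
      rw [Finset.card_image_of_injective _ (fun i j h => (Prod.mk.injEq _ _ _ _).mp h |>.2),
        Finset.card_range]
  · intro u _ v _ huv
    rw [Function.onFun, Finset.disjoint_left]
    rintro a ha hb
    simp only [Finset.mem_image, Finset.mem_range] at ha hb
    obtain ⟨i, -, rfl⟩ := ha
    obtain ⟨j, -, hj⟩ := hb
    exact huv (congrArg Prod.fst hj).symm

def DTok (U W : Finset V') (nT : V' → ℕ) : Finset (V' ⊕ V' × ℕ) :=
  U.image Sum.inl ∪ (TW W nT).image Sum.inr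

lemma card_DTok : (DTok U W nT).card = U.card + ∑ w ∈ W, nT w := by
  rw [DTok, Finset.card_union_of_disjoint, Finset.card_image_of_injective _ Sum.inl_injective,
    Finset.card_image_of_injective _ Sum.inr_injective, card_TW]
  rw [Finset.disjoint_left]
  rintro a ha hb
  simp only [Finset.mem_image] at ha hb
  obtain ⟨u, -, rfl⟩ := ha
  obtain ⟨p, -, hp⟩ := hb
  exact Sum.inr_ne_inl hp

def Tok (U W : Finset V') (nP nT : V' → ℕ) (e : Sym2 (AugV V' nP nT))
    (t : V' ⊕ V' × ℕ) : Prop :=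
  (∃ u, t = Sum.inl u ∧ u ∈ U ∧ (Sum.inl u : AugV V' nP nT) ∈ e) ∨
  (∃ w i, t = Sum.inr (w, i) ∧ w ∈ W ∧ i < nT w ∧
    ∀ v ∈ e, v = (Sum.inl w : AugV V' nP nT) ∨
      ∃ q : {q : V' × ℕ × Bool // q.2.1 < nT q.1},
        v = Sum.inr (Sum.inr q) ∧ q.1.1 = w ∧ q.1.2.1 = i)

lemma tok_mem_DTok {e t} (h : Tok U W nP nT e t) : t ∈ DTok U W nT := by
  rcases h with ⟨u, rfl, hu, -⟩ | ⟨w, i, rfl, hw, hi, -⟩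
  · exact Finset.mem_union_left _ (Finset.mem_image_of_mem _ hu)
  · refine Finset.mem_union_right _ (Finset.mem_image_of_mem _ ?_)
    rw [TW, Finset.mem_biUnion]
    exact ⟨w, hw, Finset.mem_image.mpr ⟨i, Finset.mem_range.mpr hi, rfl⟩⟩

lemma tok_exists (hdisj : ∀ x : V', ¬(x ∈ U ∧ x ∈ W))
    (hbip : ∀ a b : V', G'.Adj a b → (a ∈ U ∧ b ∈ W) ∨ (a ∈ W ∧ b ∈ U))
    (hnP0 : ∀ x ∉ U, nP x = 0) (hnT0 : ∀ x ∉ W, nT x = 0) :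
    ∀ e ∈ (AugGraph G' nP nT).edgeSet, ∃ t, Tok U W nP nT e t := by
  intro e
  induction e using Sym2.ind with
  | _ a b =>
    intro he
    rw [SimpleGraph.mem_edgeSet] at he
    rcases adj_cases he with ⟨x, y, hxy, rfl, rfl⟩ | ⟨x, p, hp, hc⟩ | ⟨x, q, hq, hc⟩ |
      ⟨q, q', h1, h2, hne, rfl, rfl⟩
    · rcases hbip _ _ hxy with ⟨h1, -⟩ | ⟨-, h2⟩
      · exact ⟨Sum.inl x, Or.inl ⟨x, rfl, h1, Sym2.mem_iff.mpr (Or.inl rfl)⟩⟩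
      · exact ⟨Sum.inl y, Or.inl ⟨y, rfl, h2, Sym2.mem_iff.mpr (Or.inr rfl)⟩⟩
    · have hx : x ∈ U := hp ▸ pbase hnP0 p.2
      rcases hc with ⟨rfl, rfl⟩ | ⟨rfl, rfl⟩
      · exact ⟨Sum.inl x, Or.inl ⟨x, rfl, hx, Sym2.mem_iff.mpr (Or.inl rfl)⟩⟩
      · exact ⟨Sum.inl x, Or.inl ⟨x, rfl, hx, Sym2.mem_iff.mpr (Or.inr rfl)⟩⟩
    · have hxW : x ∈ W := hq ▸ wbase hnT0 q.2
      have hiq : q.1.2.1 < nT x := hq ▸ q.2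
      refine ⟨Sum.inr (x, q.1.2.1), Or.inr ⟨x, q.1.2.1, rfl, hxW, hiq, ?_⟩⟩
      intro v hv
      rcases hc with ⟨rfl, rfl⟩ | ⟨rfl, rfl⟩ <;> rw [Sym2.mem_iff] at hv <;>
        rcases hv with rfl | rfl
      · exact Or.inl rfl
      · exact Or.inr ⟨q, rfl, hq, rfl⟩
      · exact Or.inr ⟨q, rfl, hq, rfl⟩
      · exact Or.inl rfl
    · have hw : q.1.1 ∈ W := wbase hnT0 q.2
      refine ⟨Sum.inr (q.1.1, q.1.2.1), Or.inr ⟨q.1.1, q.1.2.1, rfl, hw, q.2, ?_⟩⟩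
      intro v hv
      rw [Sym2.mem_iff] at hv
      rcases hv with rfl | rfl
      · exact Or.inr ⟨q, rfl, rfl, rfl⟩
      · exact Or.inr ⟨q', rfl, h1.symm, h2.symm⟩

lemma matching_bound (hdisj : ∀ x : V', ¬(x ∈ U ∧ x ∈ W))
    (hbip : ∀ a b : V', G'.Adj a b → (a ∈ U ∧ b ∈ W) ∨ (a ∈ W ∧ b ∈ U))
    (hnP0 : ∀ x ∉ U, nP x = 0) (hnT0 : ∀ x ∉ W, nT x = 0) (hU : U.Nonempty)
    {M : Finset (Sym2 (AugV V' nP nT))} (hM : IsMatchingSet (AugGraph G' nP nT) M) :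
    M.card ≤ U.card + ∑ w ∈ W, nT w := by
  classical
  rw [← card_DTok (U := U) (W := W) (nT := nT)]
  apply Finset.card_le_card_of_injOn
    (fun e => if h : ∃ t, Tok U W nP nT e t then h.choose else Sum.inl hU.choose)
  · intro e he
    have hex : ∃ t, Tok U W nP nT e t :=
      tok_exists hdisj hbip hnP0 hnT0 e (hM.1 e he)
    simp only [dif_pos hex]
    exact tok_mem_DTok hex.choose_spec
  · intro e₁ he₁ e₂ he₂ hfe
    by_contra hne
    have hex₁ : ∃ t, Tok U W nP nT e₁ t := tok_exists hdisj hbip hnP0 hnT0 e₁ (hM.1 e₁ he₁)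
    have hex₂ : ∃ t, Tok U W nP nT e₂ t := tok_exists hdisj hbip hnP0 hnT0 e₂ (hM.1 e₂ he₂)
    simp only at hfe
    rw [dif_pos hex₁, dif_pos hex₂] at hfe
    have ht₁ := hex₁.choose_spec
    have ht₂ := hex₂.choose_spec
    rw [hfe] at ht₁
    -- now ht₁, ht₂ : Tok .. e₁/e₂ (same token)
    obtain ⟨a, b, rfl⟩ : ∃ a b, e₁ = s(a, b) := Sym2.ind (fun a b => ⟨a, b, rfl⟩) e₁
    obtain ⟨c, d, rfl⟩ : ∃ c d, e₂ = s(c, d) := Sym2.ind (fun c d => ⟨c, d, rfl⟩) e₂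
    have hab : a ≠ b := ((SimpleGraph.mem_edgeSet _).mp (hM.1 _ he₁)).ne
    have hcd : c ≠ d := ((SimpleGraph.mem_edgeSet _).mp (hM.1 _ he₂)).ne
    have hdisjoint : ∀ v ∈ s(a, b), v ∉ s(c, d) := hM.2 _ he₁ _ he₂ hne
    have hac : a ≠ c := fun h => hdisjoint a (Sym2.mem_mk_left a b) (h ▸ Sym2.mem_mk_left c d)
    have had : a ≠ d := fun h => hdisjoint a (Sym2.mem_mk_left a b) (h ▸ Sym2.mem_mk_right c d)
    have hbc : b ≠ c := fun h => hdisjoint b (Sym2.mem_mk_right a b) (h ▸ Sym2.mem_mk_left c d)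
    have hbd : b ≠ d := fun h => hdisjoint b (Sym2.mem_mk_right a b) (h ▸ Sym2.mem_mk_right c d)
    rcases ht₁ with ⟨u, htu, hu, hmem₁⟩ | ⟨w, i, htw, hw, hi, hprop₁⟩ <;>
      rcases ht₂ with ⟨u', htu', hu', hmem₂⟩ | ⟨w', i', htw', hw', hi', hprop₂⟩
    · rw [htu'] at htu
      obtain rfl : u = u' := (Sum.inl.inj htu).symm
      exact hdisjoint _ hmem₁ hmem₂
    · rw [htw'] at htu; simp at htu
    · rw [htu'] at htw; simp at htw
    · rw [htw'] at htw
      obtain ⟨rfl, rfl⟩ : w = w' ∧ i = i' := by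
        have := (Sum.inr.inj htw).symm
        exact ⟨congrArg Prod.fst this, congrArg Prod.snd this⟩
      -- both edges inside a 3-element set
      set S3 : Finset (AugV V' nP nT) :=
        {Sum.inl w, Sum.inr (Sum.inr ⟨(w, i, false), hi⟩), Sum.inr (Sum.inr ⟨(w, i, true), hi⟩)}
        with hS3
      have conv : ∀ {v : AugV V' nP nT},
          (v = Sum.inl w ∨ ∃ q : {q : V' × ℕ × Bool // q.2.1 < nT q.1},
            v = Sum.inr (Sum.inr q) ∧ q.1.1 = w ∧ q.1.2.1 = i) → v ∈ S3 := by
        rintro v (rfl | ⟨q, rfl, hq1, hq2⟩)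
        · rw [hS3]; exact Finset.mem_insert_self _ _
        · cases hq3 : q.1.2.2
          · have hqq : q = ⟨(w, i, false), hi⟩ :=
              Subtype.ext (Prod.ext hq1 (Prod.ext hq2 hq3))
            rw [hqq, hS3]
            exact Finset.mem_insert_of_mem (Finset.mem_insert_self _ _)
          · have hqq : q = ⟨(w, i, true), hi⟩ :=
              Subtype.ext (Prod.ext hq1 (Prod.ext hq2 hq3))
            rw [hqq, hS3]
            exact Finset.mem_insert_of_mem
              (Finset.mem_insert_of_mem (Finset.mem_singleton_self _))
      have hsub : ({a, b, c, d} : Finset (AugV V' nP nT)) ⊆ S3 := by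
        intro v hv
        simp only [Finset.mem_insert, Finset.mem_singleton] at hv
        rcases hv with rfl | rfl | rfl | rfl
        · exact conv (hprop₁ v (Sym2.mem_mk_left _ b))
        · exact conv (hprop₁ v (Sym2.mem_mk_right a _))
        · exact conv (hprop₂ v (Sym2.mem_mk_left _ d))
        · exact conv (hprop₂ v (Sym2.mem_mk_right c _))
      have h4 : ({a, b, c, d} : Finset (AugV V' nP nT)).card = 4 := by
        rw [Finset.card_insert_of_notMem (by simp [hab, hac, had]),
          Finset.card_insert_of_notMem (by simp [hbc, hbd]),
          Finset.card_insert_of_notMem (by simp [hcd]), Finset.card_singleton]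
      have h3 : S3.card ≤ 3 := by
        rw [hS3]
        refine le_trans (Finset.card_insert_le _ _) ?_
        refine Nat.succ_le_succ (le_trans (Finset.card_insert_le _ _) ?_)
        simp
      have := Finset.card_le_card hsub
      omega

end mbound

section isbound
variable {V' : Type*} [Fintype V'] [DecidableEq V'] {G' : SimpleGraph V'}
  {U W : Finset V'} {nP nT : V' → ℕ}

def idxOf {nP nT : V' → ℕ} : AugV V' nP nT → ℕ
  | Sum.inl _ => 0
  | Sum.inr (Sum.inl p) => p.1.2
  | Sum.inr (Sum.inr q) => q.1.2.1

lemma fiberU (hnT0 : ∀ x ∉ W, nT x = 0) (hdisj : ∀ x : V', ¬(x ∈ U ∧ x ∈ W))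
    (hnP : ∀ u ∈ U, 1 ≤ nP u)
    {S : Finset (AugV V' nP nT)} (hS : IsIndepFinset (AugGraph G' nP nT) S)
    {x : V'} (hx : x ∈ U) :
    (S.filter (fun v => baseOf v = x)).card ≤ nP x := by
  classical
  have hxW : x ∉ W := fun h => hdisj x ⟨hx, h⟩
  have hforms : ∀ v ∈ S.filter (fun v => baseOf v = x),
      v = Sum.inl x ∨ ∃ p : {p : V' × ℕ // p.2 < nP p.1},
        v = Sum.inr (Sum.inl p) ∧ p.1.1 = x := by
    intro v hv
    rw [Finset.mem_filter] at hv
    obtain ⟨hvS, hvb⟩ := hv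
    obtain (y | (p | q)) := v
    · exact Or.inl (by rw [show y = x from hvb])
    · exact Or.inr ⟨p, rfl, hvb⟩
    · exfalso
      have := q.2
      rw [show q.1.1 = x from hvb, hnT0 x hxW] at this
      omega
  by_cases hix : Sum.inl x ∈ S.filter (fun v => baseOf v = x)
  · have hsub : S.filter (fun v => baseOf v = x) ⊆ {Sum.inl x} := by
      intro v hv
      rw [Finset.mem_singleton]
      rcases hforms v hv with h | ⟨p, rfl, hp⟩
      · exact h
      · exfalso
        refine hS _ (Finset.mem_filter.mp hix).1 _ (Finset.mem_filter.mp hv).1 ?_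
        rw [adj_iff]
        exact ⟨inl_ne_inr, Or.inl hp⟩
    calc (S.filter (fun v => baseOf v = x)).card ≤ 1 := by
          simpa using Finset.card_le_card hsub
      _ ≤ nP x := hnP x hx
  · apply le_trans (Finset.card_le_card_of_injOn idxOf ?_ ?_) (by rw [Finset.card_range])
    · intro v hv
      rcases hforms v hv with h | ⟨p, rfl, hp⟩
      · exact absurd (h ▸ hv) hix
      · rw [Finset.mem_coe, Finset.mem_range]
        have := p.2
        rw [hp] at this
        exact this
    · intro v hv v' hv' hidx
      rcases hforms v hv with h | ⟨p, rfl, hp⟩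
      · exact absurd (h ▸ hv) hix
      rcases hforms v' hv' with h | ⟨p', rfl, hp'⟩
      · exact absurd (h ▸ hv') hix
      have : p = p' := Subtype.ext (Prod.ext (hp.trans hp'.symm) hidx)
      rw [this]

lemma fiberW (hnP0 : ∀ x ∉ U, nP x = 0) (hdisj : ∀ x : V', ¬(x ∈ U ∧ x ∈ W))
    {S : Finset (AugV V' nP nT)} (hS : IsIndepFinset (AugGraph G' nP nT) S)
    {x : V'} (hx : x ∈ W) :
    (S.filter (fun v => baseOf v = x)).card ≤ max (nT x) 1 := by
  classical
  have hxU : x ∉ U := fun h => hdisj x ⟨h, hx⟩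
  have hforms : ∀ v ∈ S.filter (fun v => baseOf v = x),
      v = Sum.inl x ∨ ∃ q : {q : V' × ℕ × Bool // q.2.1 < nT q.1},
        v = Sum.inr (Sum.inr q) ∧ q.1.1 = x := by
    intro v hv
    rw [Finset.mem_filter] at hv
    obtain ⟨hvS, hvb⟩ := hv
    obtain (y | (p | q)) := v
    · exact Or.inl (by rw [show y = x from hvb])
    · exfalso
      have := p.2
      rw [show p.1.1 = x from hvb, hnP0 x hxU] at this
      omega
    · exact Or.inr ⟨q, rfl, hvb⟩
  by_cases hix : Sum.inl x ∈ S.filter (fun v => baseOf v = x)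
  · have hsub : S.filter (fun v => baseOf v = x) ⊆ {Sum.inl x} := by
      intro v hv
      rw [Finset.mem_singleton]
      rcases hforms v hv with h | ⟨q, rfl, hq⟩
      · exact h
      · exfalso
        refine hS _ (Finset.mem_filter.mp hix).1 _ (Finset.mem_filter.mp hv).1 ?_
        rw [adj_iff]
        exact ⟨inl_ne_inr, Or.inl hq⟩
    calc (S.filter (fun v => baseOf v = x)).card ≤ 1 := by
          simpa using Finset.card_le_card hsub
      _ ≤ max (nT x) 1 := le_max_right _ _
  · refine le_trans ?_ (le_max_left (nT x) 1)
    apply le_trans (Finset.card_le_card_of_injOn idxOf ?_ ?_) (by rw [Finset.card_range])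
    · intro v hv
      rcases hforms v hv with h | ⟨q, rfl, hq⟩
      · exact absurd (h ▸ hv) hix
      · rw [Finset.mem_coe, Finset.mem_range]
        have := q.2
        rw [hq] at this
        exact this
    · intro v hv v' hv' hidx
      rcases hforms v hv with h | ⟨q, rfl, hq⟩
      · exact absurd (h ▸ hv) hix
      rcases hforms v' hv' with h | ⟨q', rfl, hq'⟩
      · exact absurd (h ▸ hv') hix
      by_cases hbb : q.1.2.2 = q'.1.2.2
      · have : q = q' := Subtype.ext (Prod.ext (hq.trans hq'.symm) (Prod.ext hidx hbb))
        rw [this]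
      · exfalso
        refine hS _ (Finset.mem_filter.mp hv).1 _ (Finset.mem_filter.mp hv').1 ?_
        rw [adj_iff]
        refine ⟨fun hc => hbb (congrArg (fun z => z.2.2) (tri_inj hc)), Or.inl ?_⟩
        exact ⟨hq.trans hq'.symm, hidx⟩

lemma indep_bound (hpart : ∀ x : V', x ∈ U ∨ x ∈ W)
    (hdisj : ∀ x : V', ¬(x ∈ U ∧ x ∈ W))
    (hbip : ∀ a b : V', G'.Adj a b → (a ∈ U ∧ b ∈ W) ∨ (a ∈ W ∧ b ∈ U))
    (hnP : ∀ u ∈ U, 1 ≤ nP u) (hnP0 : ∀ x ∉ U, nP x = 0) (hnT0 : ∀ x ∉ W, nT x = 0)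
    {S : Finset (AugV V' nP nT)} (hS : IsIndepFinset (AugGraph G' nP nT) S) :
    S.card ≤ ∑ u ∈ U, nP u + ∑ w ∈ W, max (nT w) 1 := by
  classical
  rw [Finset.card_eq_sum_card_fiberwise (f := baseOf) (t := Finset.univ)
    (fun v _ => Finset.mem_univ _)]
  have huniv : (Finset.univ : Finset V') = U ∪ W := by
    ext x
    simp only [Finset.mem_univ, Finset.mem_union, true_iff]
    exact hpart x
  rw [huniv, Finset.sum_union (Finset.disjoint_left.mpr (fun x hx hx' => hdisj x ⟨hx, hx'⟩))]
  exact Nat.add_le_add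
    (Finset.sum_le_sum fun x hx => fiberU hnT0 hdisj hnP hS hx)
    (Finset.sum_le_sum fun x hx => fiberW hnP0 hdisj hS hx)

end isbound

end CW

theorem stmt_15 {V' : Type*} [Fintype V'] [DecidableEq V'] (G' : SimpleGraph V')
    (U W : Finset V') (nP nT : V' → ℕ)
    (hpart : ∀ x : V', x ∈ U ∨ x ∈ W) (hdisj : ∀ x : V', ¬(x ∈ U ∧ x ∈ W))
    (hU : U.Nonempty) (hW : W.Nonempty)
    (hbip : ∀ a b : V', G'.Adj a b → (a ∈ U ∧ b ∈ W) ∨ (a ∈ W ∧ b ∈ U))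
    (hconn : G'.Connected)
    (hnP : ∀ u ∈ U, 1 ≤ nP u) (hnP0 : ∀ x ∉ U, nP x = 0)
    (hnT0 : ∀ x ∉ W, nT x = 0) :
    MMn (AugGraph G' nP nT) = U.card + ∑ w ∈ W, nT w ∧
    IMn (AugGraph G' nP nT) = U.card + ∑ w ∈ W, nT w ∧
    ISn (AugGraph G' nP nT) = ∑ u ∈ U, nP u + ∑ w ∈ W, max (nT w) 1 := by
  classical
  have hMind := CW.M0_induced (U := U) (W := W) (nP := nP) (nT := nT) (G' := G')
    hdisj hbip hnT0
  have hMcard := CW.card_M0 (U := U) (W := W) (nP := nP) (nT := nT) hnP hnT0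
  have hSind := CW.S0_indep (U := U) (W := W) (nP := nP) (nT := nT) (G' := G')
    hdisj hbip hnP0
  have hScard := CW.card_S0 (U := U) (W := W) (nP := nP) (nT := nT) hnP0 hnT0
  have hmb : ∀ n ∈ {n | ∃ M : Finset (Sym2 (AugV V' nP nT)),
      IsMatchingSet (AugGraph G' nP nT) M ∧ M.card = n},
      n ≤ U.card + ∑ w ∈ W, nT w := by
    rintro n ⟨M, hM, rfl⟩
    exact CW.matching_bound hdisj hbip hnP0 hnT0 hU hM
  have himb : ∀ n ∈ {n | ∃ M : Finset (Sym2 (AugV V' nP nT)),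
      IsInducedMatchingSet (AugGraph G' nP nT) M ∧ M.card = n},
      n ≤ U.card + ∑ w ∈ W, nT w := by
    rintro n ⟨M, hM, rfl⟩
    exact CW.matching_bound hdisj hbip hnP0 hnT0 hU hM.1
  have hisb : ∀ n ∈ {n | ∃ S : Finset (AugV V' nP nT),
      IsIndepFinset (AugGraph G' nP nT) S ∧ S.card = n},
      n ≤ ∑ u ∈ U, nP u + ∑ w ∈ W, max (nT w) 1 := by
    rintro n ⟨S, hS, rfl⟩
    exact CW.indep_bound hpart hdisj hbip hnP hnP0 hnT0 hS
  refine ⟨?_, ?_, ?_⟩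
  · apply le_antisymm
    · exact csSup_le ⟨_, _, hMind.1, rfl⟩ hmb
    · exact le_csSup ⟨_, hmb⟩ ⟨_, hMind.1, hMcard⟩
  · apply le_antisymm
    · exact csSup_le ⟨_, _, hMind, rfl⟩ himb
    · exact le_csSup ⟨_, himb⟩ ⟨_, hMind, hMcard⟩
  · apply le_antisymm
    · exact csSup_le ⟨_, _, hSind, rfl⟩ hisb
    · exact le_csSup ⟨_, hisb⟩ ⟨_, hSind, hScard⟩
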